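/- For every natural number n ≥ 7, λ₁(A_{Z₂}) < n − 2. -/

import Mathlib

open Matrix

/-- The largest eigenvalue of a real matrix (for symmetric matrices this is λ₁). -/
noncomputable def lam1 {n : ℕ} (A : Matrix (Fin n) (Fin n) ℝ) : ℝ :=
  sSup {μ : ℝ | ∃ v : Fin n → ℝ, v ≠ 0 ∧ A.mulVec v = μ • v}

/-- `A` is the adjacency matrix of a signed graph: symmetric, zero diagonal,
entries in {-1,0,1}. -/
def IsSignedAdj {n : ℕ} (A : Matrix (Fin n) (Fin n) ℝ) : Prop :=
  A.IsSymm ∧ (∀ i, A i i = 0) ∧ ∀ i j, A i j = -1 ∨ A i j = 0 ∨ A i j = 1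

/-- A signed graph is balanced if a global sign switching makes all edges positive. -/
def IsBalanced {n : ℕ} (A : Matrix (Fin n) (Fin n) ℝ) : Prop :=
  ∃ s : Fin n → ℝ, (∀ i, s i = -1 ∨ s i = 1) ∧ ∀ i j, 0 ≤ s i * A i j * s j

/-- Every fully present copy of K_{3,3} is balanced. -/
def K33Free {n : ℕ} (A : Matrix (Fin n) (Fin n) ℝ) : Prop :=
  ∀ a₁ a₂ a₃ b₁ b₂ b₃ : Fin n,
    [a₁, a₂, a₃, b₁, b₂, b₃].Nodup →
    (∀ a ∈ [a₁, a₂, a₃], ∀ b ∈ [b₁, b₂, b₃], A a b ≠ 0) →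
    ∀ a ∈ [a₁, a₂, a₃], ∀ a' ∈ [a₁, a₂, a₃], ∀ b ∈ [b₁, b₂, b₃], ∀ b' ∈ [b₁, b₂, b₃],
      A a b * A a b' * A a' b * A a' b' = 1

/-- Switching isomorphism of signed adjacency matrices. -/
def SwitchIso {n : ℕ} (A B : Matrix (Fin n) (Fin n) ℝ) : Prop :=
  ∃ σ : Equiv.Perm (Fin n), ∃ s : Fin n → ℝ, (∀ i, s i = -1 ∨ s i = 1) ∧
    ∀ i j, B i j = s i * s j * A (σ i) (σ j)

/-- Adjacency matrix of Γ_{n,t}: vertex 0 is u, vertices 1,…,n-1 form an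
all-positive K_{n-1}; u is adjacent to 1,…,t-1, with u1 the unique negative edge. -/
noncomputable def Mnt (n t : ℕ) : Matrix (Fin n) (Fin n) ℝ :=
  Matrix.of fun i j =>
    if i = j then 0
    else if (i : ℕ) = 0 then (if (j : ℕ) = 1 then -1 else if (j : ℕ) < t then 1 else 0)
    else if (j : ℕ) = 0 then (if (i : ℕ) = 1 then -1 else if (i : ℕ) < t then 1 else 0)
    else 1

/-- Adjacency matrix of the signed graph U (vertices v₁,…,vₙ are indices 0,…,n-1):
v₁v₂ negative; v₁,v₂ each positively joined to v₃,v₄,v₅; v₃,…,vₙ an all-positive K_{n-2}. -/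
noncomputable def AU (n : ℕ) : Matrix (Fin n) (Fin n) ℝ :=
  Matrix.of fun i j =>
    if i = j then 0
    else if ((i : ℕ) = 0 ∧ (j : ℕ) = 1) ∨ ((i : ℕ) = 1 ∧ (j : ℕ) = 0) then -1
    else if 2 ≤ (i : ℕ) ∧ 2 ≤ (j : ℕ) then 1
    else if ((i : ℕ) ≤ 1 ∧ 2 ≤ (j : ℕ) ∧ (j : ℕ) ≤ 4) ∨
            ((j : ℕ) ≤ 1 ∧ 2 ≤ (i : ℕ) ∧ (i : ℕ) ≤ 4) then 1
    else 0

/-- Adjacency matrix of Z₁: v₁v₂ negative; v₁ positive to v₃,v₄,v₅; v₂ positive to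
v₃,v₄,v₆; v₃,…,vₙ an all-positive K_{n-2} minus the edge v₅v₆. -/
noncomputable def AZ1 (n : ℕ) : Matrix (Fin n) (Fin n) ℝ :=
  Matrix.of fun i j =>
    if i = j then 0
    else if ((i : ℕ) = 0 ∧ (j : ℕ) = 1) ∨ ((i : ℕ) = 1 ∧ (j : ℕ) = 0) then -1
    else if 2 ≤ (i : ℕ) ∧ 2 ≤ (j : ℕ) then
      (if ((i : ℕ) = 4 ∧ (j : ℕ) = 5) ∨ ((i : ℕ) = 5 ∧ (j : ℕ) = 4) then 0 else 1)
    else if ((i : ℕ) = 0 ∧ ((j : ℕ) = 2 ∨ (j : ℕ) = 3 ∨ (j : ℕ) = 4)) ∨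
            ((j : ℕ) = 0 ∧ ((i : ℕ) = 2 ∨ (i : ℕ) = 3 ∨ (i : ℕ) = 4)) ∨
            ((i : ℕ) = 1 ∧ ((j : ℕ) = 2 ∨ (j : ℕ) = 3 ∨ (j : ℕ) = 5)) ∨
            ((j : ℕ) = 1 ∧ ((i : ℕ) = 2 ∨ (i : ℕ) = 3 ∨ (i : ℕ) = 5)) then 1
    else 0

/-- Adjacency matrix of Z₂: v₁v₂ negative; v₁ positive to v₃,v₄,v₅; v₂ positive to
v₃,v₄,v₆; v₃,…,vₙ an all-positive K_{n-2} minus the edges v₄v₅ and v₄v₆. -/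
noncomputable def AZ2 (n : ℕ) : Matrix (Fin n) (Fin n) ℝ :=
  Matrix.of fun i j =>
    if i = j then 0
    else if ((i : ℕ) = 0 ∧ (j : ℕ) = 1) ∨ ((i : ℕ) = 1 ∧ (j : ℕ) = 0) then -1
    else if 2 ≤ (i : ℕ) ∧ 2 ≤ (j : ℕ) then
      (if ((i : ℕ) = 3 ∧ ((j : ℕ) = 4 ∨ (j : ℕ) = 5)) ∨
          ((j : ℕ) = 3 ∧ ((i : ℕ) = 4 ∨ (i : ℕ) = 5)) then 0 else 1)
    else if ((i : ℕ) = 0 ∧ ((j : ℕ) = 2 ∨ (j : ℕ) = 3 ∨ (j : ℕ) = 4)) ∨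
            ((j : ℕ) = 0 ∧ ((i : ℕ) = 2 ∨ (i : ℕ) = 3 ∨ (i : ℕ) = 4)) ∨
            ((i : ℕ) = 1 ∧ ((j : ℕ) = 2 ∨ (j : ℕ) = 3 ∨ (j : ℕ) = 5)) ∨
            ((j : ℕ) = 1 ∧ ((i : ℕ) = 2 ∨ (i : ℕ) = 3 ∨ (i : ℕ) = 5)) then 1
    else 0

/-- Adjacency matrix of W: v₁v₂ negative; v₁,v₃,v₅,v₆,…,vₙ an all-positive K_{n-2};
v₂ positive to v₃,v₄; v₄ positive to v₁,v₃,v₅. -/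
noncomputable def AW (n : ℕ) : Matrix (Fin n) (Fin n) ℝ :=
  Matrix.of fun i j =>
    if i = j then 0
    else if ((i : ℕ) = 0 ∧ (j : ℕ) = 1) ∨ ((i : ℕ) = 1 ∧ (j : ℕ) = 0) then -1
    else if (i : ℕ) ≠ 1 ∧ (i : ℕ) ≠ 3 ∧ (j : ℕ) ≠ 1 ∧ (j : ℕ) ≠ 3 then 1
    else if ((i : ℕ) = 1 ∧ ((j : ℕ) = 2 ∨ (j : ℕ) = 3)) ∨
            ((j : ℕ) = 1 ∧ ((i : ℕ) = 2 ∨ (i : ℕ) = 3)) ∨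
            ((i : ℕ) = 3 ∧ ((j : ℕ) = 0 ∨ (j : ℕ) = 2 ∨ (j : ℕ) = 4)) ∨
            ((j : ℕ) = 3 ∧ ((i : ℕ) = 0 ∨ (i : ℕ) = 2 ∨ (i : ℕ) = 4)) then 1
    else 0

lemma AZ2_abs_le {n : ℕ} (i j : Fin n) : |AZ2 n i j| ≤ 1 := by
  simp only [AZ2, Matrix.of_apply]
  split_ifs <;> norm_num

lemma AZ2_zero {n : ℕ} (i j : Fin n)
    (h : (i : ℕ) = (j : ℕ) ∨ ((i : ℕ) = 0 ∧ ((j : ℕ) = 5 ∨ (j : ℕ) = 6)) ∨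
      ((i : ℕ) = 1 ∧ ((j : ℕ) = 4 ∨ (j : ℕ) = 6)) ∨
      ((i : ℕ) = 3 ∧ ((j : ℕ) = 4 ∨ (j : ℕ) = 5)) ∨
      ((i : ℕ) = 4 ∧ ((j : ℕ) = 1 ∨ (j : ℕ) = 3)) ∨
      ((i : ℕ) = 5 ∧ ((j : ℕ) = 0 ∨ (j : ℕ) = 3)) ∨
      (6 ≤ (i : ℕ) ∧ (j : ℕ) ≤ 1)) :
    AZ2 n i j = 0 := by
  rcases eq_or_ne i j with rfl | hij
  · simp [AZ2]
  · have hij' : (i : ℕ) ≠ (j : ℕ) := fun hc => hij (Fin.ext hc)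
    simp only [AZ2, Matrix.of_apply, if_neg hij]
    split_ifs <;> first | rfl | omega

lemma card3 {n : ℕ} (i a b : Fin n) (hia : (i : ℕ) ≠ (a : ℕ)) (hib : (i : ℕ) ≠ (b : ℕ))
    (hab : (a : ℕ) ≠ (b : ℕ)) : ({i, a, b} : Finset (Fin n)).card = 3 := by
  rw [Finset.card_insert_of_notMem, Finset.card_insert_of_notMem, Finset.card_singleton]
  · simp only [Finset.mem_singleton]
    exact fun hc => hab (by rw [hc])
  · simp only [Finset.mem_insert, Finset.mem_singleton]
    rintro (hc | hc) <;> [exact hia (by rw [hc]); exact hib (by rw [hc])]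

lemma row_bound {n : ℕ} (hn : 7 ≤ n) (i : Fin n) (v : Fin n → ℝ) (W : ℝ) (hW0 : 0 ≤ W)
    (hW : ∀ j, j ≠ i → |v j| ≤ W) :
    |∑ j, AZ2 n i j * v j| ≤ (if (i : ℕ) = 2 then (n : ℝ) - 1 else (n : ℝ) - 3) * W := by
  obtain ⟨t, hit, ht0, htc⟩ : ∃ t : Finset (Fin n), i ∈ t ∧ (∀ j ∈ t, AZ2 n i j = 0) ∧
      (if (i : ℕ) = 2 then 1 else 3) ≤ t.card := by
    by_cases h2 : (i : ℕ) = 2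
    · refine ⟨{i}, Finset.mem_singleton_self i, ?_, by simp [h2]⟩
      intro j hj
      rw [Finset.mem_singleton] at hj
      rw [hj]
      exact AZ2_zero i i (Or.inl rfl)
    · have h5 : 5 < n := by omega
      have h6 : 6 < n := by omega
      have h4 : 4 < n := by omega
      have h3 : 3 < n := by omega
      have h1 : 1 < n := by omega
      have h0 : 0 < n := by omega
      obtain hi | hi | hi | hi | hi | hi :
          (i : ℕ) = 0 ∨ (i : ℕ) = 1 ∨ (i : ℕ) = 3 ∨ (i : ℕ) = 4 ∨ (i : ℕ) = 5 ∨ 6 ≤ (i : ℕ) := by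
        omega
      · refine ⟨{i, ⟨5, h5⟩, ⟨6, h6⟩}, Finset.mem_insert_self _ _, ?_, by
          rw [if_neg h2, card3 i _ _ (by simpa using by omega) (by simpa using by omega)
            (by simp)]⟩
        intro j hj
        simp only [Finset.mem_insert, Finset.mem_singleton] at hj
        rcases hj with rfl | rfl | rfl
        · exact AZ2_zero _ _ (Or.inl rfl)
        · exact AZ2_zero _ _ (by simp [hi])
        · exact AZ2_zero _ _ (by simp [hi])
      · refine ⟨{i, ⟨4, h4⟩, ⟨6, h6⟩}, Finset.mem_insert_self _ _, ?_, by
          rw [if_neg h2, card3 i _ _ (by simpa using by omega) (by simpa using by omega)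
            (by simp)]⟩
        intro j hj
        simp only [Finset.mem_insert, Finset.mem_singleton] at hj
        rcases hj with rfl | rfl | rfl
        · exact AZ2_zero _ _ (Or.inl rfl)
        · exact AZ2_zero _ _ (by simp [hi])
        · exact AZ2_zero _ _ (by simp [hi])
      · refine ⟨{i, ⟨4, h4⟩, ⟨5, h5⟩}, Finset.mem_insert_self _ _, ?_, by
          rw [if_neg h2, card3 i _ _ (by simpa using by omega) (by simpa using by omega)
            (by simp)]⟩
        intro j hj
        simp only [Finset.mem_insert, Finset.mem_singleton] at hj
        rcases hj with rfl | rfl | rfl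
        · exact AZ2_zero _ _ (Or.inl rfl)
        · exact AZ2_zero _ _ (by simp [hi])
        · exact AZ2_zero _ _ (by simp [hi])
      · refine ⟨{i, ⟨1, h1⟩, ⟨3, h3⟩}, Finset.mem_insert_self _ _, ?_, by
          rw [if_neg h2, card3 i _ _ (by simpa using by omega) (by simpa using by omega)
            (by simp)]⟩
        intro j hj
        simp only [Finset.mem_insert, Finset.mem_singleton] at hj
        rcases hj with rfl | rfl | rfl
        · exact AZ2_zero _ _ (Or.inl rfl)
        · exact AZ2_zero _ _ (by simp [hi])
        · exact AZ2_zero _ _ (by simp [hi])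
      · refine ⟨{i, ⟨0, h0⟩, ⟨3, h3⟩}, Finset.mem_insert_self _ _, ?_, by
          rw [if_neg h2, card3 i _ _ (by simpa using by omega) (by simpa using by omega)
            (by simp)]⟩
        intro j hj
        simp only [Finset.mem_insert, Finset.mem_singleton] at hj
        rcases hj with rfl | rfl | rfl
        · exact AZ2_zero _ _ (Or.inl rfl)
        · exact AZ2_zero _ _ (by simp [hi])
        · exact AZ2_zero _ _ (by simp [hi])
      · refine ⟨{i, ⟨0, h0⟩, ⟨1, h1⟩}, Finset.mem_insert_self _ _, ?_, by
          rw [if_neg h2, card3 i _ _ (by simpa using by omega) (by simpa using by omega)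
            (by simp)]⟩
        intro j hj
        simp only [Finset.mem_insert, Finset.mem_singleton] at hj
        rcases hj with rfl | rfl | rfl
        · exact AZ2_zero _ _ (Or.inl rfl)
        · exact AZ2_zero _ _ (by simp; omega)
        · exact AZ2_zero _ _ (by simp; omega)
  have htn : t.card ≤ n := by
    simpa using Finset.card_le_card (Finset.subset_univ t)
  have hsplit : ∑ j, |AZ2 n i j * v j| =
      ∑ j ∈ Finset.univ \ t, |AZ2 n i j * v j| + ∑ j ∈ t, |AZ2 n i j * v j| :=
    (Finset.sum_sdiff (Finset.subset_univ t)).symm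
  have hzero : ∑ j ∈ t, |AZ2 n i j * v j| = 0 := by
    apply Finset.sum_eq_zero
    intro j hj
    rw [ht0 j hj, zero_mul, abs_zero]
  have hterm : ∀ j ∈ Finset.univ \ t, |AZ2 n i j * v j| ≤ W := by
    intro j hj
    have hji : j ≠ i := fun hc => (Finset.mem_sdiff.mp hj).2 (hc ▸ hit)
    rw [abs_mul]
    calc |AZ2 n i j| * |v j| ≤ 1 * W :=
          mul_le_mul (AZ2_abs_le i j) (hW j hji) (abs_nonneg _) zero_le_one
      _ = W := one_mul W
  have hcard : ((Finset.univ \ t).card : ℝ) ≤ if (i : ℕ) = 2 then (n : ℝ) - 1 else (n : ℝ) - 3 := by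
    have : (Finset.univ \ t).card = n - t.card := by
      rw [Finset.card_sdiff_of_subset (Finset.subset_univ t), Finset.card_univ, Fintype.card_fin]
    rw [this, Nat.cast_sub htn]
    by_cases h2 : (i : ℕ) = 2
    · rw [if_pos h2]
      have h1 : (1 : ℕ) ≤ t.card := by simpa [h2] using htc
      have h1' : (1 : ℝ) ≤ (t.card : ℝ) := by exact_mod_cast h1
      linarith
    · rw [if_neg h2]
      have h3 : (3 : ℕ) ≤ t.card := by simpa [h2] using htc
      have h3' : (3 : ℝ) ≤ (t.card : ℝ) := by exact_mod_cast h3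
      linarith
  calc |∑ j, AZ2 n i j * v j| ≤ ∑ j, |AZ2 n i j * v j| := Finset.abs_sum_le_sum_abs _ _
    _ = ∑ j ∈ Finset.univ \ t, |AZ2 n i j * v j| := by rw [hsplit, hzero, add_zero]
    _ ≤ (Finset.univ \ t).card • W := Finset.sum_le_card_nsmul _ _ W hterm
    _ = ((Finset.univ \ t).card : ℝ) * W := nsmul_eq_mul _ _
    _ ≤ (if (i : ℕ) = 2 then (n : ℝ) - 1 else (n : ℝ) - 3) * W :=
        mul_le_mul_of_nonneg_right hcard hW0

theorem lam1_AZ2_lt (n : ℕ) (hn : 7 ≤ n) : lam1 (AZ2 n) < (n : ℝ) - 2 := by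
  have hn' : (7 : ℝ) ≤ (n : ℝ) := by exact_mod_cast hn
  have hsq : Real.sqrt (((n : ℝ) - 1) * ((n : ℝ) - 3)) < (n : ℝ) - 2 := by
    rw [show ((n : ℝ) - 2) = Real.sqrt (((n : ℝ) - 2) ^ 2) by
      rw [Real.sqrt_sq (by linarith)]]
    apply Real.sqrt_lt_sqrt (by nlinarith)
    nlinarith
  refine lt_of_le_of_lt (Real.sSup_le ?_ (Real.sqrt_nonneg _)) hsq
  rintro μ ⟨v, hv0, hev⟩
  have hev' : ∀ i, ∑ j, AZ2 n i j * v j = μ * v i := by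
    intro i
    have := congrFun hev i
    simpa [Matrix.mulVec, dotProduct] using this
  -- two largest coordinates
  obtain ⟨p, -, hp⟩ := Finset.exists_max_image Finset.univ (fun j => |v j|)
    ⟨⟨0, by omega⟩, Finset.mem_univ _⟩
  have hp' : ∀ j, |v j| ≤ |v p| := fun j => hp j (Finset.mem_univ j)
  have hqex : (Finset.univ.erase p).Nonempty := by
    rcases eq_or_ne p ⟨0, by omega⟩ with h | h
    · exact ⟨⟨1, by omega⟩, Finset.mem_erase.mpr ⟨by rw [h]; simp [Fin.ext_iff], Finset.mem_univ _⟩⟩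
    · exact ⟨⟨0, by omega⟩, Finset.mem_erase.mpr ⟨Ne.symm h, Finset.mem_univ _⟩⟩
  obtain ⟨q, hqmem, hq⟩ := Finset.exists_max_image (Finset.univ.erase p) (fun j => |v j|) hqex
  have hpq : q ≠ p := (Finset.mem_erase.mp hqmem).1
  have hq' : ∀ j, j ≠ p → |v j| ≤ |v q| := fun j hj =>
    hq j (Finset.mem_erase.mpr ⟨hj, Finset.mem_univ _⟩)
  have hvp : v p ≠ 0 := by
    intro hc
    apply hv0
    funext i
    have := hp' i
    rw [hc, abs_zero] at this
    exact abs_eq_zero.mp (le_antisymm this (abs_nonneg _))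
  rcases eq_or_lt_of_le (abs_nonneg (v q)) with hq0 | hq0
  · -- v q = 0, so v supported at p only, μ = 0
    have hz : ∀ j, j ≠ p → v j = 0 := by
      intro j hj
      have := hq' j hj
      rw [← hq0] at this
      exact abs_eq_zero.mp (le_antisymm this (abs_nonneg _))
    have hμ : μ * v p = 0 := by
      rw [← hev' p]
      apply Finset.sum_eq_zero
      intro j _
      rcases eq_or_ne j p with rfl | hj
      · rw [AZ2_zero _ _ (Or.inl rfl), zero_mul]
      · rw [hz j hj, mul_zero]
    have : μ = 0 := by
      rcases mul_eq_zero.mp hμ with h | h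
      · exact h
      · exact absurd h hvp
    rw [this]
    exact Real.sqrt_nonneg _
  · -- Brauer's ovals argument
    have hp0 : 0 < |v p| := lt_of_lt_of_le hq0 (hp' q)
    set Rp : ℝ := if (p : ℕ) = 2 then (n : ℝ) - 1 else (n : ℝ) - 3 with hRp
    set Rq : ℝ := if (q : ℕ) = 2 then (n : ℝ) - 1 else (n : ℝ) - 3 with hRq
    have hRp0 : 0 ≤ Rp := by rw [hRp]; split_ifs <;> linarith
    have hRq0 : 0 ≤ Rq := by rw [hRq]; split_ifs <;> linarith
    have e1 : |μ| * |v p| ≤ Rp * |v q| := by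
      have := row_bound hn p v (|v q|) (abs_nonneg _) hq'
      rw [hev' p, abs_mul] at this
      exact this
    have e2 : |μ| * |v q| ≤ Rq * |v p| := by
      have := row_bound hn q v (|v p|) (abs_nonneg _) (fun j _ => hp' j)
      rw [hev' q, abs_mul] at this
      exact this
    have hRpq : Rp * Rq ≤ ((n : ℝ) - 1) * ((n : ℝ) - 3) := by
      have hne : ¬((p : ℕ) = 2 ∧ (q : ℕ) = 2) := by
        rintro ⟨h1, h2⟩
        exact hpq (Fin.ext (h2.trans h1.symm))
      rw [hRp, hRq]
      by_cases hp2 : (p : ℕ) = 2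
      · by_cases hq2 : (q : ℕ) = 2
        · exact absurd ⟨hp2, hq2⟩ hne
        · rw [if_pos hp2, if_neg hq2]
      · by_cases hq2 : (q : ℕ) = 2
        · rw [if_neg hp2, if_pos hq2]; nlinarith
        · rw [if_neg hp2, if_neg hq2]; nlinarith
    have hmul : (|μ| * |v p|) * (|μ| * |v q|) ≤ (Rp * |v q|) * (Rq * |v p|) :=
      mul_le_mul e1 e2 (by positivity) (by positivity)
    have hμ2 : μ ^ 2 ≤ ((n : ℝ) - 1) * ((n : ℝ) - 3) := by
      have h1 : |μ| ^ 2 * (|v p| * |v q|) ≤ Rp * Rq * (|v p| * |v q|) := by nlinarith [hmul]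
      have hpos : 0 < |v p| * |v q| := mul_pos hp0 hq0
      have h2 : |μ| ^ 2 ≤ Rp * Rq := (mul_le_mul_iff_left₀ hpos).mp h1
      calc μ ^ 2 = |μ| ^ 2 := (sq_abs μ).symm
        _ ≤ Rp * Rq := h2
        _ ≤ _ := hRpq
    calc μ ≤ |μ| := le_abs_self μ
      _ = Real.sqrt (μ ^ 2) := (Real.sqrt_sq_eq_abs μ).symm
      _ ≤ Real.sqrt (((n : ℝ) - 1) * ((n : ℝ) - 3)) := Real.sqrt_le_sqrt hμ2
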